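/- With EJ defined by the recursion above, EJ α t ≠ 0 for some t > 0 if and only if α belongs to the language of words generated by concatenating the single letter 0 and doubled letters mm with m ≠ 0 (i.e., α can be written as a concatenation of blocks, each block being either [0] or [m, m] for some m ≠ 0). -/

import Mathlib

open intervalIntegral

noncomputable def EJrev : List ℕ → ℝ → ℝ
  | [], _ => 1
  | [a], t => if a = 0 then ∫ s in (0:ℝ)..t, EJrev [] s else 0
  | a :: b :: rest, t =>
      if a = 0 then ∫ s in (0:ℝ)..t, EJrev (b :: rest) s
      else if b = a then (1/2) * ∫ s in (0:ℝ)..t, EJrev rest s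
      else 0

/-- Expectation of the Stratonovich iterated integral `J_α(t)`, defined by the
recursion on the last letter of the word. -/
noncomputable def EJ (α : List ℕ) (t : ℝ) : ℝ := EJrev α.reverse t

/-- A block is `[0]` or `[m,m]` with `m ≠ 0`. -/
def IsBlock (b : List ℕ) : Prop := b = [0] ∨ ∃ m : ℕ, m ≠ 0 ∧ b = [m, m]

/-- A word is admissible if it is a concatenation of blocks. -/
def Admissible (α : List ℕ) : Prop :=
  ∃ L : List (List ℕ), (∀ b ∈ L, IsBlock b) ∧ L.flatten = α

/-- Left-to-right parsing into blocks. -/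
def RevAdm : List ℕ → Prop
  | [] => True
  | 0 :: rest => RevAdm rest
  | [_+1] => False
  | (a+1) :: b :: rest => b = a + 1 ∧ RevAdm rest

lemma revAdm_nil : RevAdm [] := trivial
lemma revAdm_zero (rest : List ℕ) : RevAdm (0 :: rest) ↔ RevAdm rest := by
  cases rest <;> simp [RevAdm]
lemma revAdm_single (m : ℕ) : ¬ RevAdm [m+1] := by simp [RevAdm]
lemma revAdm_double (m b : ℕ) (rest : List ℕ) :
    RevAdm ((m+1) :: b :: rest) ↔ b = m + 1 ∧ RevAdm rest := by simp [RevAdm]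

lemma main_lemma : ∀ (n : ℕ) (β : List ℕ), β.length ≤ n →
    (RevAdm β ∧ ∃ C : ℝ, 0 < C ∧ ∃ k : ℕ, ∀ t, EJrev β t = C * t ^ k) ∨
    (¬ RevAdm β ∧ ∀ t, EJrev β t = 0) := by
  intro n
  induction n with
  | zero =>
    intro β h
    have : β = [] := List.length_eq_zero_iff.mp (Nat.le_zero.mp h)
    subst this
    exact Or.inl ⟨trivial, 1, one_pos, 0, fun t => by simp [EJrev]⟩
  | succ n ih =>
    intro β hβ
    match β with
    | [] => exact Or.inl ⟨trivial, 1, one_pos, 0, fun t => by simp [EJrev]⟩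
    | 0 :: rest =>
      have hr : rest.length ≤ n := by simp at hβ; omega
      have hEq : ∀ t, EJrev (0 :: rest) t = ∫ s in (0:ℝ)..t, EJrev rest s := by
        intro t; cases rest <;> simp [EJrev]
      rcases ih rest hr with ⟨hadm, C, hC, k, hE⟩ | ⟨hadm, hE⟩
      · left
        refine ⟨(revAdm_zero rest).mpr hadm, C / (k+1), by positivity, k+1, fun t => ?_⟩
        rw [hEq t]
        have : (∫ s in (0:ℝ)..t, EJrev rest s) = ∫ s in (0:ℝ)..t, C * s ^ k := by
          simp only [hE]
        rw [this, intervalIntegral.integral_const_mul, integral_pow]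
        field_simp
        simp
      · right
        refine ⟨fun h => hadm ((revAdm_zero rest).mp h), fun t => ?_⟩
        rw [hEq t]
        have : (∫ s in (0:ℝ)..t, EJrev rest s) = ∫ s in (0:ℝ)..t, (0:ℝ) := by
          simp only [hE]
        rw [this]; simp
    | [m+1] =>
      exact Or.inr ⟨revAdm_single m, fun t => by simp [EJrev]⟩
    | (m+1) :: b :: rest =>
      by_cases hb : b = m + 1
      · subst hb
        have hr : rest.length ≤ n := by simp at hβ; omega
        have hEq : ∀ t, EJrev ((m+1) :: (m+1) :: rest) t
            = (1/2) * ∫ s in (0:ℝ)..t, EJrev rest s := by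
          intro t; simp [EJrev]
        rcases ih rest hr with ⟨hadm, C, hC, k, hE⟩ | ⟨hadm, hE⟩
        · left
          refine ⟨(revAdm_double m _ rest).mpr ⟨rfl, hadm⟩, C / (2*(k+1)), by positivity,
            k+1, fun t => ?_⟩
          rw [hEq t]
          have : (∫ s in (0:ℝ)..t, EJrev rest s) = ∫ s in (0:ℝ)..t, C * s ^ k := by
            simp only [hE]
          rw [this, intervalIntegral.integral_const_mul, integral_pow]
          field_simp
          simp
        · right
          refine ⟨fun h => hadm (((revAdm_double m _ rest).mp h).2), fun t => ?_⟩
          rw [hEq t]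
          have : (∫ s in (0:ℝ)..t, EJrev rest s) = ∫ s in (0:ℝ)..t, (0:ℝ) := by
            simp only [hE]
          rw [this]; simp
      · right
        refine ⟨fun h => hb ((revAdm_double m b rest).mp h).1, fun t => by
          simp [EJrev, hb]⟩

lemma revAdm_iff_admissible : ∀ (n : ℕ) (β : List ℕ), β.length ≤ n →
    (RevAdm β ↔ Admissible β) := by
  intro n
  induction n with
  | zero =>
    intro β h
    have : β = [] := List.length_eq_zero_iff.mp (Nat.le_zero.mp h)
    subst this
    simp only [RevAdm, true_iff]
    exact ⟨[], by simp, rfl⟩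
  | succ n ih =>
    intro β hβ
    constructor
    · intro hadm
      match β with
      | [] => exact ⟨[], by simp, rfl⟩
      | 0 :: rest =>
        have hr : rest.length ≤ n := by simp at hβ; omega
        obtain ⟨L, hL, hflat⟩ := (ih rest hr).mp ((revAdm_zero rest).mp hadm)
        refine ⟨[0] :: L, ?_, by simp [hflat]⟩
        intro b hb
        rcases List.mem_cons.mp hb with rfl | hb
        · exact Or.inl rfl
        · exact hL b hb
      | [m+1] => exact absurd hadm (revAdm_single m)
      | (m+1) :: b :: rest =>
        obtain ⟨rfl, hrest⟩ := (revAdm_double m b rest).mp hadm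
        have hr : rest.length ≤ n := by simp at hβ; omega
        obtain ⟨L, hL, hflat⟩ := (ih rest hr).mp hrest
        refine ⟨[m+1, m+1] :: L, ?_, by simp [hflat]⟩
        intro b hb
        rcases List.mem_cons.mp hb with rfl | hb
        · exact Or.inr ⟨m+1, by simp, rfl⟩
        · exact hL b hb
    · rintro ⟨L, hL, rfl⟩
      clear hβ
      induction L with
      | nil => exact trivial
      | cons b L ihL =>
        have hLtail : ∀ c ∈ L, IsBlock c := fun c hc => hL c (List.mem_cons_of_mem _ hc)
        have htail : RevAdm L.flatten := ihL hLtail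
        rcases hL b List.mem_cons_self with rfl | ⟨m, hm, rfl⟩
        · simpa [revAdm_zero] using htail
        · obtain ⟨k, rfl⟩ := Nat.exists_eq_succ_of_ne_zero hm
          simp only [List.flatten_cons, List.cons_append, List.nil_append]
          exact (revAdm_double k _ _).mpr ⟨rfl, htail⟩

lemma admissible_reverse {α : List ℕ} (h : Admissible α) : Admissible α.reverse := by
  obtain ⟨L, hL, rfl⟩ := h
  refine ⟨L.reverse.map List.reverse, ?_, ?_⟩
  · intro b hb
    simp only [List.mem_map, List.mem_reverse] at hb
    obtain ⟨c, hc, rfl⟩ := hb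
    rcases hL c hc with rfl | ⟨m, hm, rfl⟩
    · exact Or.inl rfl
    · exact Or.inr ⟨m, hm, rfl⟩
  · rw [List.reverse_flatten]
    congr 1
    rw [← List.map_reverse]

theorem stmt1 (α : List ℕ) :
    (∃ t : ℝ, 0 < t ∧ EJ α t ≠ 0) ↔ Admissible α := by
  have hmain := main_lemma α.reverse.length α.reverse le_rfl
  have hiff := revAdm_iff_admissible α.reverse.length α.reverse le_rfl
  constructor
  · rintro ⟨t, ht, hne⟩
    rcases hmain with ⟨hadm, _⟩ | ⟨_, hE⟩
    · have : Admissible α.reverse := hiff.mp hadm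
      simpa using admissible_reverse this
    · exact absurd (hE t) hne
  · intro hadm
    have : RevAdm α.reverse := hiff.mpr (admissible_reverse hadm)
    rcases hmain with ⟨_, C, hC, k, hE⟩ | ⟨hnadm, _⟩
    · exact ⟨1, one_pos, by simp [EJ, hE 1, hC.ne']⟩
    · exact absurd this hnadm
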